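/- arXiv:2502.19006 — 4 statements merged into one kernel-verified Lean document; each statement's English description precedes it below -/
import Mathlib

section
/- Elliptical potential count lemma: for every λ > 0, every T ∈ ℕ₊ and every sequence x₁, …, x_T ∈ X, the set 𝒯 = {t ∈ {1, …, T} : λ⁻¹ σ_{λ²}(x_t; X_{t−1}) > 1} (where X_{t−1} = (x₁, …, x_{t−1})) satisfies |𝒯| ≤ (3/2) ln det(I_T + λ⁻² K_T); in particular |𝒯| ≤ 3 γ_T(λ²). -/
open Matrix

noncomputable section

/-- Gram matrix `K = [k(x_i, x_j)]` of the kernel `k` on the finite family `xs`. -/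
def gram {X ι : Type*} [Fintype ι] (k : X → X → ℝ) (xs : ι → X) :
    Matrix ι ι ℝ := fun i j => k (xs i) (xs j)

/-- Kernel vector `k_t(x) = (k(x₁, x), …, k(x_t, x))`. -/
def kvec {X ι : Type*} [Fintype ι] (k : X → X → ℝ) (xs : ι → X) (x : X) :
    ι → ℝ := fun i => k (xs i) x

/-- Regularized posterior variance `σ²_{λ²}(x; xs) = k(x,x) - k_t(x)ᵀ (K + λ² I)⁻¹ k_t(x)`.
For the empty family this is `k(x,x)`. -/
def postVar {X ι : Type*} [Fintype ι] [DecidableEq ι] (k : X → X → ℝ)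
    (xs : ι → X) (lam : ℝ) (x : X) : ℝ :=
  k x x - kvec k xs x ⬝ᵥ ((gram k xs + lam ^ 2 • (1 : Matrix ι ι ℝ))⁻¹ *ᵥ kvec k xs x)

/-- Noise-free posterior standard deviation `σ(x; xs) = inf_{λ > 0} σ_{λ²}(x; xs)`. -/
def postStd {X ι : Type*} [Fintype ι] [DecidableEq ι] (k : X → X → ℝ)
    (xs : ι → X) (x : X) : ℝ :=
  ⨅ lam : {l : ℝ // 0 < l}, Real.sqrt (postVar k xs lam.1 x)

/-- Maximum information gain `γ_T(λ²) = sup_{x₁,…,x_T} (1/2) ln det (I_T + λ⁻² K_T)`,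
a value in `[0, ∞]`. -/
def mig {X : Type*} (k : X → X → ℝ) (T : ℕ) (lam : ℝ) : ENNReal :=
  ⨆ xs : Fin T → X, ENNReal.ofReal
    ((1 / 2) * Real.log ((1 + (lam ^ 2)⁻¹ • gram k xs).det))

/-- The prefix `X_{t-1} = (x₁, …, x_{t-1})` of a finite sequence (`t` is 0-indexed). -/
def pre {X : Type*} {T : ℕ} (xs : Fin T → X) (t : Fin T) : Fin t.1 → X :=
  fun i => xs ⟨i.1, i.2.trans t.2⟩

/-- Noise-free posterior mean `μ(x; xs) = k_t(x)ᵀ K⁻¹ (f(x₁), …, f(x_t))ᵀ`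
(for the empty family this is `0`). -/
def postMean {X ι : Type*} [Fintype ι] [DecidableEq ι] (k : X → X → ℝ)
    (xs : ι → X) (f : X → ℝ) (x : X) : ℝ :=
  kvec k xs x ⬝ᵥ ((gram k xs)⁻¹ *ᵥ fun i => f (xs i))

/-- Noise-free posterior standard deviation in closed form,
`σ(x; xs) = (k(x,x) - k_t(x)ᵀ K⁻¹ k_t(x))^{1/2}` (for the empty family, `k(x,x)^{1/2}`). -/
def postStdInv {X ι : Type*} [Fintype ι] [DecidableEq ι] (k : X → X → ℝ)
    (xs : ι → X) (x : X) : ℝ :=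
  Real.sqrt (k x x - kvec k xs x ⬝ᵥ ((gram k xs)⁻¹ *ᵥ kvec k xs x))

/-- The first `t` points `X_t = (x₁, …, x_t)` of an infinite sequence. -/
def prefN {X : Type*} (xseq : ℕ → X) (t : ℕ) : Fin t → X := fun i => xseq i

/-! ### Auxiliary lemmas -/

lemma gram_psd_fin {X : Type*} (k : X → X → ℝ)
    (hsym : ∀ x y : X, k x y = k y x)
    (hpsd : ∀ (n : ℕ) (xv : Fin n → X) (c : Fin n → ℝ),
      0 ≤ ∑ i, ∑ j, c i * c j * k (xv i) (xv j))
    {n : ℕ} (xv : Fin n → X) : (gram k xv).PosSemidef := by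
  refine Matrix.PosSemidef.of_dotProduct_mulVec_nonneg ?_ ?_
  · ext i j
    simp [_root_.gram, Matrix.conjTranspose_apply, hsym (xv i) (xv j)]
  · intro c
    have h := hpsd n xv c
    simp only [star_trivial, dotProduct, Matrix.mulVec, _root_.gram]
    calc (0:ℝ) ≤ ∑ i, ∑ j, c i * c j * k (xv i) (xv j) := h
      _ = ∑ i, c i * ∑ j, k (xv i) (xv j) * c j := by
        refine Finset.sum_congr rfl fun i _ => ?_
        rw [Finset.mul_sum]
        exact Finset.sum_congr rfl fun j _ => by ring

lemma gram_psd {X ι : Type*} [Fintype ι] (k : X → X → ℝ)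
    (hsym : ∀ x y : X, k x y = k y x)
    (hpsd : ∀ (n : ℕ) (xv : Fin n → X) (c : Fin n → ℝ),
      0 ≤ ∑ i, ∑ j, c i * c j * k (xv i) (xv j))
    (xv : ι → X) : (gram k xv).PosSemidef := by
  let e := Fintype.equivFin ι
  have h : gram k xv = (gram k (xv ∘ e.symm)).submatrix e e := by
    ext i j
    simp [_root_.gram, Matrix.submatrix_apply]
  rw [h]
  exact (gram_psd_fin k hsym hpsd _).submatrix e

lemma reg_posDef {X ι : Type*} [Fintype ι] [DecidableEq ι] (k : X → X → ℝ)
    (hsym : ∀ x y : X, k x y = k y x)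
    (hpsd : ∀ (n : ℕ) (xv : Fin n → X) (c : Fin n → ℝ),
      0 ≤ ∑ i, ∑ j, c i * c j * k (xv i) (xv j))
    {lam : ℝ} (hlam : 0 < lam)
    (xv : ι → X) : (gram k xv + lam ^ 2 • (1 : Matrix ι ι ℝ)).PosDef := by
  have h1 : (lam ^ 2 • (1 : Matrix ι ι ℝ)) = Matrix.diagonal (fun _ => lam ^ 2) := by
    ext i j
    by_cases h : i = j <;> simp [Matrix.one_apply, Matrix.diagonal_apply, h]
  rw [h1]
  exact Matrix.PosDef.posSemidef_add (gram_psd k hsym hpsd xv)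
    (Matrix.posDef_diagonal_iff.mpr fun _ => by positivity)

lemma entry_eq {ι : Type*} [Fintype ι] (N : Matrix ι ι ℝ) (B : Matrix ι (Fin 1) ℝ) :
    (Bᴴ * N * B) 0 0 = (fun i => B i 0) ⬝ᵥ (N *ᵥ fun i => B i 0) := by
  simp only [Matrix.mul_apply, Matrix.conjTranspose_apply, dotProduct, Matrix.mulVec,
    star_trivial, Finset.sum_mul, Finset.mul_sum]
  rw [Finset.sum_comm]
  refine Finset.sum_congr rfl fun i _ => Finset.sum_congr rfl fun j _ => by ring

lemma psd_entry_nonneg (N : Matrix (Fin 1) (Fin 1) ℝ) (h : N.PosSemidef) : 0 ≤ N 0 0 := by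
  have := h.dotProduct_mulVec_nonneg (fun _ => 1)
  simpa [dotProduct, Matrix.mulVec] using this

lemma postVar_nonneg {X ι : Type*} [Fintype ι] [DecidableEq ι] (k : X → X → ℝ)
    (hsym : ∀ x y : X, k x y = k y x)
    (hpsd : ∀ (n : ℕ) (xv : Fin n → X) (c : Fin n → ℝ),
      0 ≤ ∑ i, ∑ j, c i * c j * k (xv i) (xv j))
    {lam : ℝ} (hlam : 0 < lam) (xv : ι → X) (x : X) :
    0 ≤ postVar k xv lam x := by
  set A : Matrix ι ι ℝ := gram k xv + lam ^ 2 • 1 with hA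
  set B : Matrix ι (Fin 1) ℝ := fun i _ => k (xv i) x with hB
  set D : Matrix (Fin 1) (Fin 1) ℝ := fun _ _ => k x x with hD
  have hApd : A.PosDef := reg_posDef k hsym hpsd hlam xv
  haveI : Invertible A := A.invertibleOfIsUnitDet (isUnit_iff_ne_zero.mpr hApd.det_pos.ne')
  have hM : (fromBlocks A B Bᴴ D).PosSemidef := by
    have he : fromBlocks A B Bᴴ D =
        gram k (Sum.elim xv fun _ : Fin 1 => x) +
          Matrix.diagonal (Sum.elim (fun _ : ι => lam ^ 2) (fun _ : Fin 1 => 0)) := by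
      ext i j
      rcases i with i | i <;> rcases j with j | j <;>
        simp only [Matrix.fromBlocks_apply₁₁, Matrix.fromBlocks_apply₁₂, Matrix.fromBlocks_apply₂₁,
          Matrix.fromBlocks_apply₂₂, Matrix.conjTranspose_apply] <;>
        simp [_root_.gram, hA, hB, hD, Matrix.fromBlocks, Matrix.diagonal_apply, Matrix.one_apply,
          Matrix.conjTranspose_apply, Matrix.smul_apply, smul_eq_mul, hsym x (xv _)]
    rw [he]
    exact (gram_psd k hsym hpsd _).add
      (Matrix.PosSemidef.diagonal (fun i => by rcases i with i | i <;> simp <;> positivity))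
  have hS := (Matrix.PosDef.fromBlocks₁₁ B D hApd).mp hM
  have h0 := psd_entry_nonneg _ hS
  have hE : (D - Bᴴ * A⁻¹ * B) 0 0 = postVar k xv lam x := by
    rw [Matrix.sub_apply, entry_eq]
    rfl
  linarith [h0, hE]

lemma det_eq_prod {X : Type*} (k : X → X → ℝ)
    (hsym : ∀ x y : X, k x y = k y x)
    (hpsd : ∀ (n : ℕ) (xv : Fin n → X) (c : Fin n → ℝ),
      0 ≤ ∑ i, ∑ j, c i * c j * k (xv i) (xv j))
    {lam : ℝ} (hlam : 0 < lam) (y : ℕ → X) :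
    ∀ n : ℕ,
      (gram k (prefN y n) + lam ^ 2 • (1 : Matrix (Fin n) (Fin n) ℝ)).det =
        ∏ i : Fin n, (lam ^ 2 + postVar k (prefN y i.1) lam (y i.1)) := by
  intro n
  induction n with
  | zero => simp
  | succ n ih =>
    have hApd : (gram k (prefN y n) + lam ^ 2 • (1 : Matrix (Fin n) (Fin n) ℝ)).PosDef :=
      reg_posDef k hsym hpsd hlam (prefN y n)
    set A : Matrix (Fin n) (Fin n) ℝ := gram k (prefN y n) + lam ^ 2 • 1 with hA
    set B : Matrix (Fin n) (Fin 1) ℝ := fun i _ => k (y i.1) (y n) with hB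
    set D : Matrix (Fin 1) (Fin 1) ℝ := fun _ _ => k (y n) (y n) + lam ^ 2 with hD
    haveI : Invertible A := A.invertibleOfIsUnitDet (isUnit_iff_ne_zero.mpr hApd.det_pos.ne')
    have hsub : (gram k (prefN y (n+1)) +
          lam ^ 2 • (1 : Matrix (Fin (n+1)) (Fin (n+1)) ℝ)).submatrix
          finSumFinEquiv finSumFinEquiv = fromBlocks A B Bᴴ D := by
      ext i j
      rcases i with i | i <;> rcases j with j | j <;>
        simp only [Matrix.fromBlocks_apply₁₁, Matrix.fromBlocks_apply₁₂, Matrix.fromBlocks_apply₂₁,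
          Matrix.fromBlocks_apply₂₂, Matrix.conjTranspose_apply] <;>
        simp [_root_.gram, prefN, hA, hB, hD, Matrix.submatrix_apply,
          finSumFinEquiv_apply_left, finSumFinEquiv_apply_right, Matrix.one_apply,
          Matrix.conjTranspose_apply, Matrix.smul_apply, smul_eq_mul, Fin.ext_iff,
          hsym (y n) (y _)] <;>
        (intro h; exact absurd h (by omega))
    have hpv : postVar k (prefN y n) lam (y n) =
        k (y n) (y n) - (fun i => B i 0) ⬝ᵥ (A⁻¹ *ᵥ fun i => B i 0) := rfl
    have hdet : (gram k (prefN y (n+1)) +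
          lam ^ 2 • (1 : Matrix (Fin (n+1)) (Fin (n+1)) ℝ)).det =
        A.det * (lam ^ 2 + postVar k (prefN y n) lam (y n)) := by
      rw [← Matrix.det_submatrix_equiv_self finSumFinEquiv, hsub, Matrix.det_fromBlocks₁₁,
        invOf_eq_nonsing_inv, Matrix.det_fin_one]
      congr 1
      rw [Matrix.sub_apply, entry_eq, hpv]
      show k (y n) (y n) + lam ^ 2 - _ = _
      ring
    rw [hdet, ih, Fin.prod_univ_castSucc]
    rfl

/-- Elliptical potential count lemma. -/
theorem elliptical_potential_count
    {X : Type*} [Nonempty X] (k : X → X → ℝ)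
    (hsym : ∀ x y : X, k x y = k y x)
    (hpsd : ∀ (n : ℕ) (xv : Fin n → X) (c : Fin n → ℝ),
      0 ≤ ∑ i, ∑ j, c i * c j * k (xv i) (xv j))
    (lam : ℝ) (hlam : 0 < lam) (T : ℕ) (hT : 0 < T) (xs : Fin T → X) :
    (({t : Fin T | 1 < lam⁻¹ * Real.sqrt (postVar k (pre xs t) lam (xs t))} :
          Set (Fin T)).ncard : ℝ) ≤
        (3 / 2) * Real.log ((1 + (lam ^ 2)⁻¹ • gram k xs).det) ∧
      (({t : Fin T | 1 < lam⁻¹ * Real.sqrt (postVar k (pre xs t) lam (xs t))} :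
          Set (Fin T)).ncard : ENNReal) ≤ 3 * mig k T lam := by
  classical
  obtain ⟨x0⟩ := ‹Nonempty X›
  set y : ℕ → X := fun i => if h : i < T then xs ⟨i, h⟩ else x0 with hy
  have hyt : ∀ t : Fin T, y t.1 = xs t := fun t => by simp [hy, t.2]
  have hpre : ∀ t : Fin T, pre xs t = prefN y t.1 := by
    intro t; funext i
    simp [pre, prefN, hy, i.2.trans t.2]
  have hgram : gram k xs = gram k (prefN y T) := by
    ext i j
    simp [_root_.gram, prefN, hy, i.2, j.2]
  have hl2 : (0:ℝ) < lam ^ 2 := by positivity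
  have hpv0 : ∀ t : ℕ, 0 ≤ postVar k (prefN y t) lam (y t) := fun t =>
    postVar_nonneg k hsym hpsd hlam (prefN y t) (y t)
  set g : ℕ → ℝ := fun t => 1 + (lam ^ 2)⁻¹ * postVar k (prefN y t) lam (y t) with hg
  have hg1 : ∀ t : ℕ, 1 ≤ g t := fun t => by
    have := mul_nonneg (inv_nonneg.mpr hl2.le) (hpv0 t)
    simp only [hg]; linarith
  have hgpos : ∀ t : ℕ, 0 < g t := fun t => lt_of_lt_of_le one_pos (hg1 t)
  have hdet : (1 + (lam ^ 2)⁻¹ • gram k xs).det = ∏ i : Fin T, g i.1 := by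
    have h1 : (1 : Matrix (Fin T) (Fin T) ℝ) + (lam ^ 2)⁻¹ • gram k xs
        = (lam ^ 2)⁻¹ • (gram k (prefN y T) + lam ^ 2 • 1) := by
      rw [hgram, smul_add, smul_smul, inv_mul_cancel₀ hl2.ne', one_smul, add_comm]
    rw [h1, Matrix.det_smul, det_eq_prod k hsym hpsd hlam y T, Fintype.card_fin]
    have h2 : ((lam ^ 2)⁻¹ : ℝ) ^ T = ∏ _i : Fin T, (lam ^ 2)⁻¹ := by
      simp [Finset.prod_const]
    rw [h2, ← Finset.prod_mul_distrib]
    refine Finset.prod_congr rfl fun i _ => ?_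
    simp only [hg]
    rw [mul_add, inv_mul_cancel₀ hl2.ne']
  have hlog : Real.log ((1 + (lam ^ 2)⁻¹ • gram k xs).det) = ∑ i : Fin T, Real.log (g i.1) := by
    rw [hdet, Real.log_prod]
    exact fun i _ => (hgpos i.1).ne'
  set S : Set (Fin T) :=
    {t : Fin T | 1 < lam⁻¹ * Real.sqrt (postVar k (pre xs t) lam (xs t))} with hSdef
  have hSfin : S.Finite := S.toFinite
  have hcard : S.ncard = hSfin.toFinset.card := Set.ncard_eq_toFinset_card _ hSfin
  have key : ∀ t ∈ hSfin.toFinset, (2/3 : ℝ) ≤ Real.log (g t.1) := by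
    intro t ht
    rw [Set.Finite.mem_toFinset] at ht
    have ht' : 1 < lam⁻¹ * Real.sqrt (postVar k (prefN y t.1) lam (y t.1)) := by
      have := ht
      simp only [hSdef, Set.mem_setOf_eq] at this
      rwa [hpre t, ← hyt t] at this
    have h2 : lam < Real.sqrt (postVar k (prefN y t.1) lam (y t.1)) := by
      have h3 := mul_lt_mul_of_pos_left ht' hlam
      rwa [mul_one, ← mul_assoc, mul_inv_cancel₀ hlam.ne', one_mul] at h3
    have h4 : lam ^ 2 < postVar k (prefN y t.1) lam (y t.1) := (Real.lt_sqrt hlam.le).mp h2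
    have h6 := mul_lt_mul_of_pos_left h4 (inv_pos.mpr hl2)
    rw [inv_mul_cancel₀ hl2.ne'] at h6
    have h5 : 2 < g t.1 := by simp only [hg]; linarith
    calc (2/3 : ℝ) ≤ Real.log 2 := by
          have := Real.log_two_gt_d9; linarith
      _ ≤ Real.log (g t.1) := Real.log_le_log (by norm_num) h5.le
  have hsum1 : (hSfin.toFinset.card : ℝ) * (2/3) ≤ ∑ t ∈ hSfin.toFinset, Real.log (g t.1) := by
    have := Finset.card_nsmul_le_sum hSfin.toFinset (fun t => Real.log (g t.1)) (2/3) key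
    simpa [nsmul_eq_mul] using this
  have hsum2 : ∑ t ∈ hSfin.toFinset, Real.log (g t.1) ≤ ∑ t : Fin T, Real.log (g t.1) :=
    Finset.sum_le_sum_of_subset_of_nonneg (Finset.subset_univ _)
      (fun t _ _ => Real.log_nonneg (hg1 t.1))
  have hmain : (S.ncard : ℝ) * (2/3) ≤ Real.log ((1 + (lam ^ 2)⁻¹ • gram k xs).det) := by
    rw [hcard, hlog]
    linarith
  have part1 : (S.ncard : ℝ) ≤ (3 / 2) * Real.log ((1 + (lam ^ 2)⁻¹ • gram k xs).det) := by
    linarith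
  refine ⟨part1, ?_⟩
  have hlognn : 0 ≤ Real.log ((1 + (lam ^ 2)⁻¹ • gram k xs).det) := by
    rw [hlog]
    exact Finset.sum_nonneg fun i _ => Real.log_nonneg (hg1 i.1)
  have hle : ENNReal.ofReal ((1 / 2) * Real.log ((1 + (lam ^ 2)⁻¹ • gram k xs).det))
      ≤ mig k T lam :=
    le_iSup (fun xs => ENNReal.ofReal
      ((1 / 2) * Real.log ((1 + (lam ^ 2)⁻¹ • gram k xs).det))) xs
  calc (S.ncard : ENNReal) = ENNReal.ofReal (S.ncard : ℝ) := by
        rw [ENNReal.ofReal_natCast]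
    _ ≤ ENNReal.ofReal (3 * ((1 / 2) * Real.log ((1 + (lam ^ 2)⁻¹ • gram k xs).det))) := by
        refine ENNReal.ofReal_le_ofReal ?_
        linarith
    _ = 3 * ENNReal.ofReal ((1 / 2) * Real.log ((1 + (lam ^ 2)⁻¹ • gram k xs).det)) := by
        rw [ENNReal.ofReal_mul (by norm_num : (0:ℝ) ≤ 3)]
        norm_num
    _ ≤ 3 * mig k T lam := by
        exact mul_le_mul_right hle 3
end
end

section
/- Monotonicity of the posterior variance in the regularization parameter: for every finite sequence X_t = (x₁, …, x_t) in X, every x ∈ X and all reals 0 < λ₁ ≤ λ₂, one has 0 ≤ σ²_{λ₁²}(x; X_t) ≤ σ²_{λ₂²}(x; X_t) ≤ k(x, x); consequently σ²(x; X_t) ≤ σ²_{λ²}(x; X_t) for every λ > 0. Moreover, if the Gram matrix K_t is invertible, then σ²(x; X_t) = inf_{λ>0} σ²_{λ²}(x; X_t) = k(x, x) − k_t(x)ᵀ K_t⁻¹ k_t(x). -/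
open Matrix

noncomputable section

section Helpers

variable {n : ℕ}

private lemma le_of_forall_pos_le_add' {a b : ℝ} (h : ∀ ε : ℝ, 0 < ε → a ≤ b + ε) : a ≤ b := by
  by_contra hc
  push_neg at hc
  have := h ((a - b) / 2) (by linarith)
  linarith

private lemma dot_self_nonneg (v : Fin n → ℝ) : 0 ≤ v ⬝ᵥ v :=
  Finset.sum_nonneg fun i _ => mul_self_nonneg _

private lemma dot_symm (A : Matrix (Fin n) (Fin n) ℝ) (hA : Aᵀ = A) (v w : Fin n → ℝ) :
    v ⬝ᵥ (A *ᵥ w) = (A *ᵥ v) ⬝ᵥ w := by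
  rw [Matrix.dotProduct_mulVec, ← Matrix.mulVec_transpose, hA]

private lemma quad_eq (K : Matrix (Fin n) (Fin n) ℝ) (a : ℝ) (y z : Fin n → ℝ) :
    y ⬝ᵥ ((K + a • (1 : Matrix (Fin n) (Fin n) ℝ)) *ᵥ z) = y ⬝ᵥ (K *ᵥ z) + a * (y ⬝ᵥ z) := by
  rw [Matrix.add_mulVec, dotProduct_add, Matrix.smul_mulVec, Matrix.one_mulVec,
    dotProduct_smul, smul_eq_mul]

private lemma quad_nonneg {K : Matrix (Fin n) (Fin n) ℝ} (hK : K.PosSemidef) {a : ℝ}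
    (ha : 0 ≤ a) (y : Fin n → ℝ) :
    0 ≤ y ⬝ᵥ ((K + a • (1 : Matrix (Fin n) (Fin n) ℝ)) *ᵥ y) := by
  rw [quad_eq]
  have h1 := hK.dotProduct_mulVec_nonneg y
  rw [star_trivial] at h1
  exact add_nonneg h1 (mul_nonneg ha (dot_self_nonneg y))

private lemma shifted_sym {K : Matrix (Fin n) (Fin n) ℝ} (hK : K.PosSemidef) (a : ℝ) :
    (K + a • (1 : Matrix (Fin n) (Fin n) ℝ))ᵀ = K + a • 1 := by
  have h1 : Kᵀ = K := hK.1
  rw [Matrix.transpose_add, Matrix.transpose_smul, Matrix.transpose_one, h1]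

private lemma shifted_posDef {K : Matrix (Fin n) (Fin n) ℝ} (hK : K.PosSemidef) {a : ℝ}
    (ha : 0 < a) : (K + a • (1 : Matrix (Fin n) (Fin n) ℝ)).PosDef := by
  have h1 : (a • (1 : Matrix (Fin n) (Fin n) ℝ)).PosDef := by
    rw [Matrix.smul_one_eq_diagonal]
    exact Matrix.PosDef.diagonal fun _ => ha
  exact Matrix.PosDef.posSemidef_add hK h1

private lemma shifted_isUnit {K : Matrix (Fin n) (Fin n) ℝ} (hK : K.PosSemidef) {a : ℝ}
    (ha : 0 < a) : IsUnit (K + a • (1 : Matrix (Fin n) (Fin n) ℝ)).det :=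
  (shifted_posDef hK ha).det_pos.ne'.isUnit

/-- resolvent cancellation -/
private lemma inv_cancel {A : Matrix (Fin n) (Fin n) ℝ} (hA : IsUnit A.det) (v : Fin n → ℝ) :
    A *ᵥ (A⁻¹ *ᵥ v) = v := by
  rw [Matrix.mulVec_mulVec, Matrix.mul_nonsing_inv A hA, Matrix.one_mulVec]

/-- Central monotonicity computation. -/
private lemma inv_quad_mono (K : Matrix (Fin n) (Fin n) ℝ) (hK : K.PosSemidef)
    (v : Fin n → ℝ) {a b : ℝ} (ha : 0 ≤ a) (hab : a ≤ b)
    (hA : IsUnit (K + a • (1 : Matrix (Fin n) (Fin n) ℝ)).det)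
    (hB : IsUnit (K + b • (1 : Matrix (Fin n) (Fin n) ℝ)).det) :
    v ⬝ᵥ ((K + b • (1 : Matrix (Fin n) (Fin n) ℝ))⁻¹ *ᵥ v) ≤
        v ⬝ᵥ ((K + a • (1 : Matrix (Fin n) (Fin n) ℝ))⁻¹ *ᵥ v) ∧
      v ⬝ᵥ ((K + a • (1 : Matrix (Fin n) (Fin n) ℝ))⁻¹ *ᵥ v) -
          v ⬝ᵥ ((K + b • (1 : Matrix (Fin n) (Fin n) ℝ))⁻¹ *ᵥ v) ≤
        (b - a) * (((K + a • (1 : Matrix (Fin n) (Fin n) ℝ))⁻¹ *ᵥ v) ⬝ᵥ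
          ((K + a • (1 : Matrix (Fin n) (Fin n) ℝ))⁻¹ *ᵥ v)) := by
  set A := K + a • (1 : Matrix (Fin n) (Fin n) ℝ) with hAdef
  set B := K + b • (1 : Matrix (Fin n) (Fin n) ℝ) with hBdef
  set w := A⁻¹ *ᵥ v with hw
  set u := B⁻¹ *ᵥ v with hu
  set z := A⁻¹ *ᵥ u with hz
  have hAs : Aᵀ = A := shifted_sym hK a
  have hAw : A *ᵥ w = v := inv_cancel hA v
  have hBu : B *ᵥ u = v := inv_cancel hB v
  have hAz : A *ᵥ z = u := inv_cancel hA u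
  -- B *ᵥ u = A *ᵥ u + (b - a) • u
  have hBAu : B *ᵥ u = A *ᵥ u + (b - a) • u := by
    have : B = A + (b - a) • (1 : Matrix (Fin n) (Fin n) ℝ) := by
      rw [hAdef, hBdef, sub_smul, add_assoc, add_sub_cancel]
    rw [this, Matrix.add_mulVec, Matrix.smul_mulVec, Matrix.one_mulVec]
  -- w = u + (b-a) • z
  have hwu : w = u + (b - a) • z := by
    have h1 : v = A *ᵥ (u + (b - a) • z) := by
      rw [Matrix.mulVec_add, Matrix.mulVec_smul, hAz, ← hBAu, hBu]
    rw [hw, h1, Matrix.mulVec_mulVec, Matrix.nonsing_inv_mul A hA, Matrix.one_mulVec]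
  have huz : 0 ≤ u ⬝ᵥ z := by
    have h1 := quad_nonneg hK ha z
    rw [← hAdef, hAz] at h1
    rwa [dotProduct_comm]
  have huu : 0 ≤ u ⬝ᵥ u := dot_self_nonneg u
  have hzz : 0 ≤ z ⬝ᵥ z := dot_self_nonneg z
  have hba : 0 ≤ b - a := by linarith
  -- e1 : v ⬝ᵥ w = v ⬝ᵥ u + (b-a) * (u ⬝ᵥ w)
  have e1 : v ⬝ᵥ w = v ⬝ᵥ u + (b - a) * (u ⬝ᵥ w) := by
    calc v ⬝ᵥ w = (B *ᵥ u) ⬝ᵥ w := by rw [hBu]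
    _ = u ⬝ᵥ (B *ᵥ w) := by rw [dot_symm B (shifted_sym hK b) u w]
    _ = u ⬝ᵥ (A *ᵥ w + (b - a) • w) := by
        congr 1
        have : B = A + (b - a) • (1 : Matrix (Fin n) (Fin n) ℝ) := by
          rw [hAdef, hBdef, sub_smul, add_assoc, add_sub_cancel]
        rw [this, Matrix.add_mulVec, Matrix.smul_mulVec, Matrix.one_mulVec]
    _ = u ⬝ᵥ v + (b - a) * (u ⬝ᵥ w) := by
        rw [hAw, dotProduct_add, dotProduct_smul, smul_eq_mul]
    _ = v ⬝ᵥ u + (b - a) * (u ⬝ᵥ w) := by rw [dotProduct_comm]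
  have e2 : u ⬝ᵥ w = u ⬝ᵥ u + (b - a) * (u ⬝ᵥ z) := by
    rw [hwu, dotProduct_add, dotProduct_smul, smul_eq_mul]
  have e3 : w ⬝ᵥ w = u ⬝ᵥ u + 2 * (b - a) * (u ⬝ᵥ z) + (b - a) ^ 2 * (z ⬝ᵥ z) := by
    rw [hwu, dotProduct_add, add_dotProduct, add_dotProduct,
      dotProduct_smul, smul_dotProduct, smul_dotProduct,
      dotProduct_smul, smul_eq_mul, smul_eq_mul, smul_eq_mul, smul_eq_mul,
      dotProduct_comm z u]
    ring
  constructor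
  · nlinarith [e1, e2]
  · nlinarith [e1, e2, e3, mul_nonneg hba (mul_nonneg hba huz),
      mul_nonneg hba (mul_nonneg (mul_nonneg hba hba) hzz)]

end Helpers

section KernelHelpers

variable {X : Type*} (k : X → X → ℝ)

private lemma gram_posSemidef
    (hsym : ∀ x y : X, k x y = k y x)
    (hpsd : ∀ (n : ℕ) (xv : Fin n → X) (c : Fin n → ℝ),
      0 ≤ ∑ i, ∑ j, c i * c j * k (xv i) (xv j))
    {n : ℕ} (xs : Fin n → X) : (gram k xs).PosSemidef := by
  refine Matrix.PosSemidef.of_dotProduct_mulVec_nonneg ?_ ?_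
  · ext i j
    simp only [Matrix.conjTranspose_apply, _root_.gram, star_trivial]
    exact hsym (xs j) (xs i)
  · intro c
    rw [star_trivial]
    have h := hpsd n xs c
    calc (0:ℝ) ≤ ∑ i, ∑ j, c i * c j * k (xs i) (xs j) := h
    _ = c ⬝ᵥ (gram k xs *ᵥ c) := by
        simp only [dotProduct, Matrix.mulVec, _root_.gram, Finset.mul_sum]
        refine Finset.sum_congr rfl fun i _ => Finset.sum_congr rfl fun j _ => by ring

private lemma key_ineq
    (hsym : ∀ x y : X, k x y = k y x)
    (hpsd : ∀ (n : ℕ) (xv : Fin n → X) (c : Fin n → ℝ),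
      0 ≤ ∑ i, ∑ j, c i * c j * k (xv i) (xv j))
    {t : ℕ} (xs : Fin t → X) (x : X) (c : Fin t → ℝ) :
    0 ≤ c ⬝ᵥ (gram k xs *ᵥ c) + 2 * (c ⬝ᵥ kvec k xs x) + k x x := by
  have h := hpsd (t + 1) (Fin.snoc xs x) (Fin.snoc c 1)
  rw [Fin.sum_univ_castSucc] at h
  simp only [Fin.sum_univ_castSucc, Fin.snoc_castSucc, Fin.snoc_last, one_mul, mul_one] at h
  rw [Finset.sum_add_distrib] at h
  have h2 : ∑ j, c j * k x (xs j) = c ⬝ᵥ kvec k xs x := by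
    refine Finset.sum_congr rfl fun j _ => ?_
    rw [hsym x (xs j)]; rfl
  have h3 : ∑ i, ∑ j, c i * c j * k (xs i) (xs j) = c ⬝ᵥ (gram k xs *ᵥ c) := by
    simp only [dotProduct, Matrix.mulVec, _root_.gram, Finset.mul_sum]
    refine Finset.sum_congr rfl fun i _ => Finset.sum_congr rfl fun j _ => by ring
  have h4 : ∑ i, c i * k (xs i) x = c ⬝ᵥ kvec k xs x := rfl
  rw [h2, h3, h4] at h
  linarith


end KernelHelpers

section MainHelpers

variable {X : Type*} (k : X → X → ℝ)

private lemma dot_inv_le_kxx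
    (hsym : ∀ x y : X, k x y = k y x)
    (hpsd : ∀ (n : ℕ) (xv : Fin n → X) (c : Fin n → ℝ),
      0 ≤ ∑ i, ∑ j, c i * c j * k (xv i) (xv j))
    {t : ℕ} (xs : Fin t → X) (x : X) {a : ℝ} (ha : 0 ≤ a)
    (hA : IsUnit (gram k xs + a • (1 : Matrix (Fin t) (Fin t) ℝ)).det) :
    kvec k xs x ⬝ᵥ ((gram k xs + a • (1 : Matrix (Fin t) (Fin t) ℝ))⁻¹ *ᵥ kvec k xs x) ≤
      k x x := by
  set K := gram k xs with hKdef
  set v := kvec k xs x with hvdef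
  set A := K + a • (1 : Matrix (Fin t) (Fin t) ℝ) with hAdef
  set w := A⁻¹ *ᵥ v with hwdef
  have hAw : A *ᵥ w = v := inv_cancel hA v
  have hkey := key_ineq k hsym hpsd xs x (-w)
  rw [← hKdef, ← hvdef] at hkey
  rw [Matrix.mulVec_neg, neg_dotProduct, dotProduct_neg, neg_neg,
    neg_dotProduct] at hkey
  have hq : w ⬝ᵥ (A *ᵥ w) = w ⬝ᵥ (K *ᵥ w) + a * (w ⬝ᵥ w) := quad_eq K a w w
  rw [hAw] at hq
  have hvw : v ⬝ᵥ w = w ⬝ᵥ v := dotProduct_comm v w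
  have hww : 0 ≤ w ⬝ᵥ w := dot_self_nonneg w
  nlinarith [mul_nonneg ha hww]

private lemma dot_inv_nonneg {t : ℕ} (K : Matrix (Fin t) (Fin t) ℝ) (hK : K.PosSemidef)
    (v : Fin t → ℝ) {a : ℝ} (ha : 0 ≤ a)
    (hA : IsUnit (K + a • (1 : Matrix (Fin t) (Fin t) ℝ)).det) :
    0 ≤ v ⬝ᵥ ((K + a • (1 : Matrix (Fin t) (Fin t) ℝ))⁻¹ *ᵥ v) := by
  set A := K + a • (1 : Matrix (Fin t) (Fin t) ℝ) with hAdef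
  set u := A⁻¹ *ᵥ v with hudef
  have hAu : A *ᵥ u = v := inv_cancel hA v
  have h := quad_nonneg hK ha u
  rw [← hAdef, hAu] at h
  rwa [dotProduct_comm]

end MainHelpers

/-- Monotonicity of the posterior variance in the regularization parameter. -/
theorem postVar_monotone_in_lambda
    {X : Type*} [Nonempty X] (k : X → X → ℝ)
    (hsym : ∀ x y : X, k x y = k y x)
    (hpsd : ∀ (n : ℕ) (xv : Fin n → X) (c : Fin n → ℝ),
      0 ≤ ∑ i, ∑ j, c i * c j * k (xv i) (xv j))
    (t : ℕ) (xs : Fin t → X) (x : X) :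
    (∀ l₁ l₂ : ℝ, 0 < l₁ → l₁ ≤ l₂ →
        0 ≤ postVar k xs l₁ x ∧ postVar k xs l₁ x ≤ postVar k xs l₂ x ∧
          postVar k xs l₂ x ≤ k x x) ∧
      (∀ lam : ℝ, 0 < lam → postStd k xs x ^ 2 ≤ postVar k xs lam x) ∧
      (IsUnit (gram k xs).det →
        postStd k xs x ^ 2 =
            sInf {v : ℝ | ∃ lam : ℝ, 0 < lam ∧ v = postVar k xs lam x} ∧
          postStd k xs x ^ 2 =
            k x x - kvec k xs x ⬝ᵥ ((gram k xs)⁻¹ *ᵥ kvec k xs x)) := by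
  haveI : Nonempty {l : ℝ // 0 < l} := ⟨⟨1, one_pos⟩⟩
  have hKpsd : (gram k xs).PosSemidef := gram_posSemidef k hsym hpsd xs
  -- Part 1
  have hmain : ∀ l₁ l₂ : ℝ, 0 < l₁ → l₁ ≤ l₂ →
      0 ≤ postVar k xs l₁ x ∧ postVar k xs l₁ x ≤ postVar k xs l₂ x ∧
        postVar k xs l₂ x ≤ k x x := by
    intro l₁ l₂ h1 h12
    have h2 : 0 < l₂ := lt_of_lt_of_le h1 h12
    have hA := shifted_isUnit hKpsd (pow_pos h1 2)
    have hB := shifted_isUnit hKpsd (pow_pos h2 2)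
    have hab : l₁ ^ 2 ≤ l₂ ^ 2 := by nlinarith
    refine ⟨?_, ?_, ?_⟩
    · have h := dot_inv_le_kxx k hsym hpsd xs x (sq_nonneg l₁) hA
      simp only [postVar]
      linarith
    · have h := (inv_quad_mono (gram k xs) hKpsd (kvec k xs x) (sq_nonneg l₁) hab hA hB).1
      simp only [postVar]
      linarith
    · have h := dot_inv_nonneg (gram k xs) hKpsd (kvec k xs x) (sq_nonneg l₂) hB
      simp only [postVar]
      linarith
  -- Part 2
  have hbdd : BddBelow (Set.range fun lam : {l : ℝ // 0 < l} =>
      Real.sqrt (postVar k xs lam.1 x)) := by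
    refine ⟨0, ?_⟩
    rintro y ⟨lam, rfl⟩
    exact Real.sqrt_nonneg _
  have hstd_nonneg : 0 ≤ postStd k xs x :=
    le_ciInf fun lam => Real.sqrt_nonneg _
  have hpart2 : ∀ lam : ℝ, 0 < lam → postStd k xs x ^ 2 ≤ postVar k xs lam x := by
    intro lam hl
    have h := ciInf_le hbdd (⟨lam, hl⟩ : {l : ℝ // 0 < l})
    have hnn : 0 ≤ postVar k xs lam x := (hmain lam lam hl le_rfl).1
    calc postStd k xs x ^ 2 ≤ Real.sqrt (postVar k xs lam x) ^ 2 :=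
          pow_le_pow_left₀ hstd_nonneg h 2
    _ = postVar k xs lam x := Real.sq_sqrt hnn
  refine ⟨hmain, hpart2, fun hKu => ?_⟩
  -- Part 3
  set K := gram k xs with hKdef
  set v := kvec k xs x with hvdef
  set v0 := k x x - v ⬝ᵥ (K⁻¹ *ᵥ v) with hv0def
  set C := (K⁻¹ *ᵥ v) ⬝ᵥ (K⁻¹ *ᵥ v) with hCdef
  have hC : 0 ≤ C := dot_self_nonneg _
  have hK0 : K + (0 : ℝ) • (1 : Matrix (Fin t) (Fin t) ℝ) = K := by
    rw [zero_smul, add_zero]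
  have hA0 : IsUnit (K + (0 : ℝ) • (1 : Matrix (Fin t) (Fin t) ℝ)).det := by
    rwa [hK0]
  have h0le : ∀ lam : ℝ, 0 < lam →
      v0 ≤ postVar k xs lam x ∧ postVar k xs lam x ≤ v0 + lam ^ 2 * C := by
    intro lam hl
    have hB := shifted_isUnit hKpsd (pow_pos hl 2)
    have h := inv_quad_mono K hKpsd v le_rfl (sq_nonneg lam) hA0 hB
    rw [hK0] at h
    obtain ⟨ha1, ha2⟩ := h
    rw [sub_zero] at ha2
    constructor
    · simp only [postVar, ← hKdef, ← hvdef, ← hv0def]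
      rw [hv0def]
      linarith
    · simp only [postVar, ← hKdef, ← hvdef]
      rw [hv0def, hCdef]
      linarith
  have hv0 : 0 ≤ v0 := by
    have h := dot_inv_le_kxx k hsym hpsd xs x le_rfl hA0
    rw [hK0] at h
    rw [hv0def]
    simp only [← hKdef, ← hvdef] at h
    linarith
  -- postStd = sqrt v0
  have hstd_eq : postStd k xs x = Real.sqrt v0 := by
    apply le_antisymm
    · apply le_of_forall_pos_le_add'
      intro ε hε
      set lam := Real.sqrt (ε ^ 2 / (C + 1)) with hlamdef
      have hl : 0 < lam :=
        Real.sqrt_pos.mpr (div_pos (pow_pos hε 2) (by linarith))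
      have hlsq : lam ^ 2 = ε ^ 2 / (C + 1) :=
        Real.sq_sqrt (le_of_lt (div_pos (pow_pos hε 2) (by linarith)))
      have hδ : lam ^ 2 * C ≤ ε ^ 2 := by
        rw [hlsq, div_mul_eq_mul_div, div_le_iff₀ (by linarith : (0:ℝ) < C + 1)]
        nlinarith [sq_nonneg ε]
      have h1 : postVar k xs lam x ≤ v0 + ε ^ 2 :=
        le_trans (h0le lam hl).2 (by linarith)
      have h2 : Real.sqrt (v0 + ε ^ 2) ≤ Real.sqrt v0 + ε := by
        rw [show Real.sqrt v0 + ε = Real.sqrt ((Real.sqrt v0 + ε) ^ 2) from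
          (Real.sqrt_sq (by positivity)).symm]
        apply Real.sqrt_le_sqrt
        nlinarith [Real.sq_sqrt hv0, Real.sqrt_nonneg v0, hε.le]
      exact le_trans (ciInf_le hbdd ⟨lam, hl⟩)
        (le_trans (le_trans (Real.sqrt_le_sqrt h1) h2) le_rfl)
    · exact le_ciInf fun lam => Real.sqrt_le_sqrt (h0le lam.1 lam.2).1
  have hsq : postStd k xs x ^ 2 = v0 := by
    rw [hstd_eq, Real.sq_sqrt hv0]
  -- sInf
  have hSbd : BddBelow {w : ℝ | ∃ lam : ℝ, 0 < lam ∧ w = postVar k xs lam x} := by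
    refine ⟨v0, ?_⟩
    rintro y ⟨lam, hl, rfl⟩
    exact (h0le lam hl).1
  have hSne : Set.Nonempty {w : ℝ | ∃ lam : ℝ, 0 < lam ∧ w = postVar k xs lam x} :=
    ⟨postVar k xs 1 x, 1, one_pos, rfl⟩
  have hinf : sInf {w : ℝ | ∃ lam : ℝ, 0 < lam ∧ w = postVar k xs lam x} = v0 := by
    apply le_antisymm
    · apply le_of_forall_pos_le_add'
      intro ε hε
      set lam := Real.sqrt (ε / (C + 1)) with hlamdef
      have hl : 0 < lam := Real.sqrt_pos.mpr (div_pos hε (by linarith))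
      have hlsq : lam ^ 2 = ε / (C + 1) :=
        Real.sq_sqrt (le_of_lt (div_pos hε (by linarith)))
      have hδ : lam ^ 2 * C ≤ ε := by
        rw [hlsq, div_mul_eq_mul_div, div_le_iff₀ (by linarith : (0:ℝ) < C + 1)]
        nlinarith
      have h1 : postVar k xs lam x ≤ v0 + ε := le_trans (h0le lam hl).2 (by linarith)
      exact le_trans (csInf_le hSbd ⟨lam, hl, rfl⟩) h1
    · exact le_csInf hSne (by rintro y ⟨lam, hl, rfl⟩; exact (h0le lam hl).1)
  exact ⟨by rw [hsq, hinf], by rw [hsq, hv0def]⟩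
end
end

section
/- Deterministic noise-free confidence bound: let f belong to the pre-RKHS of k. Then for every finite sequence X_t = (x₁, …, x_t) in X whose Gram matrix K_t is invertible and every x ∈ X, |f(x) − μ(x; X_t)| ≤ ‖f‖_k · σ(x; X_t); the same bound |f(x)| ≤ ‖f‖_k · k(x, x)^{1/2} holds for the empty sequence. -/
open Matrix

noncomputable section

lemma kernel_cs {X : Type*} (k : X → X → ℝ)
    (hsym : ∀ x y : X, k x y = k y x)
    (hpsd : ∀ (n : ℕ) (xv : Fin n → X) (c : Fin n → ℝ),
      0 ≤ ∑ i, ∑ j, c i * c j * k (xv i) (xv j))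
    {n m : ℕ} (c : Fin n → ℝ) (xv : Fin n → X) (d : Fin m → ℝ) (yv : Fin m → X) :
    (∑ i, ∑ j, c i * d j * k (xv i) (yv j))^2 ≤
      (∑ i, ∑ j, c i * c j * k (xv i) (xv j)) *
        (∑ i, ∑ j, d i * d j * k (yv i) (yv j)) := by
  set A := ∑ i, ∑ j, c i * c j * k (xv i) (xv j) with hA
  set B := ∑ i, ∑ j, c i * d j * k (xv i) (yv j) with hB
  set C := ∑ i, ∑ j, d i * d j * k (yv i) (yv j) with hC
  have key : ∀ t : ℝ, 0 ≤ C * (t * t) + (2 * B) * t + A := by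
    intro t
    have h := hpsd (n + m) (Fin.addCases xv yv) (Fin.addCases c (fun j => t * d j))
    simp only [Fin.sum_univ_add, Fin.addCases_left, Fin.addCases_right,
      Finset.sum_add_distrib] at h
    have e1 : ∑ i, ∑ j, c i * (t * d j) * k (xv i) (yv j) = t * B := by
      rw [hB, Finset.mul_sum]
      refine Finset.sum_congr rfl fun i _ => ?_
      rw [Finset.mul_sum]
      exact Finset.sum_congr rfl fun j _ => by ring
    have e2 : ∑ i, ∑ j, (t * d i) * c j * k (yv i) (xv j) = t * B := by
      rw [hB, Finset.mul_sum, Finset.sum_comm]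
      refine Finset.sum_congr rfl fun i _ => ?_
      rw [Finset.mul_sum]
      exact Finset.sum_congr rfl fun j _ => by rw [hsym]; ring
    have e3 : ∑ i, ∑ j, (t * d i) * (t * d j) * k (yv i) (yv j) = (t * t) * C := by
      rw [hC, Finset.mul_sum]
      refine Finset.sum_congr rfl fun i _ => ?_
      rw [Finset.mul_sum]
      exact Finset.sum_congr rfl fun j _ => by ring
    rw [e1, e2, e3] at h
    linarith
  have hd := discrim_le_zero key
  rw [discrim] at hd
  nlinarith [hd]

/-- Deterministic noise-free confidence bound. -/
theorem noise_free_confidence_bound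
    {X : Type*} [Nonempty X] (k : X → X → ℝ)
    (hsym : ∀ x y : X, k x y = k y x)
    (hpsd : ∀ (n : ℕ) (xv : Fin n → X) (c : Fin n → ℝ),
      0 ≤ ∑ i, ∑ j, c i * c j * k (xv i) (xv j))
    (f : X → ℝ) (n : ℕ) (c : Fin n → ℝ) (xv : Fin n → X)
    (hf : ∀ x : X, f x = ∑ i, c i * k (xv i) x) :
    (∀ (t : ℕ) (xs : Fin t → X), IsUnit (gram k xs).det → ∀ x : X,
        |f x - postMean k xs f x| ≤
          Real.sqrt (∑ i, ∑ j, c i * c j * k (xv i) (xv j)) * postStdInv k xs x) ∧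
      ∀ x : X, |f x| ≤
        Real.sqrt (∑ i, ∑ j, c i * c j * k (xv i) (xv j)) * Real.sqrt (k x x) := by
  have hAnn : 0 ≤ ∑ i, ∑ j, c i * c j * k (xv i) (xv j) := hpsd n xv c
  set A := ∑ i, ∑ j, c i * c j * k (xv i) (xv j) with hA
  constructor
  · intro t xs hK x
    set K := gram k xs with hKdef
    set kv := kvec k xs x with hkv
    set a := K⁻¹ *ᵥ kv with ha
    set d : Fin (t+1) → ℝ := Fin.snoc (fun j => -(a j)) 1 with hd
    set yv : Fin (t+1) → X := Fin.snoc xs x with hyv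
    have hsymK : Kᵀ = K := by
      ext i j; simp only [hKdef, _root_.gram, Matrix.transpose_apply]; exact hsym _ _
    have hinvsym : (K⁻¹)ᵀ = K⁻¹ := by
      rw [Matrix.transpose_nonsing_inv, hsymK]
    have hμ : postMean k xs f x = ∑ j, a j * f (xs j) := by
      rw [postMean, Matrix.dotProduct_mulVec, ← Matrix.mulVec_transpose, hinvsym]
      simp [dotProduct, ha, hkv, hKdef]
    -- cross term
    have hB : ∑ i, ∑ j, c i * d j * k (xv i) (yv j) = f x - postMean k xs f x := by
      have step : ∀ i, ∑ j, c i * d j * k (xv i) (yv j)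
          = c i * k (xv i) x - ∑ j : Fin t, c i * a j * k (xv i) (xs j) := by
        intro i
        simp only [hd, hyv, Fin.sum_univ_castSucc, Fin.snoc_castSucc, Fin.snoc_last,
          mul_neg, neg_mul, mul_one, Finset.sum_neg_distrib]
        ring
      rw [Finset.sum_congr rfl fun i _ => step i, Finset.sum_sub_distrib, hμ, hf x]
      congr 1
      rw [Finset.sum_comm]
      refine Finset.sum_congr rfl fun j _ => ?_
      rw [hf (xs j), Finset.mul_sum]
      exact Finset.sum_congr rfl fun i _ => by ring
    -- variance term
    have hKa : K *ᵥ a = kv := by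
      rw [ha, Matrix.mulVec_mulVec, Matrix.mul_nonsing_inv K hK, Matrix.one_mulVec]
    have hC : ∑ p, ∑ q, d p * d q * k (yv p) (yv q)
        = k x x - kv ⬝ᵥ (K⁻¹ *ᵥ kv) := by
      have expand : ∑ p, ∑ q, d p * d q * k (yv p) (yv q)
          = (∑ p, ∑ q, a p * a q * k (xs p) (xs q))
            - (∑ p, a p * k (xs p) x) - (∑ q, a q * k x (xs q)) + k x x := by
        simp only [hd, hyv, Fin.sum_univ_castSucc, Fin.snoc_castSucc, Fin.snoc_last,
          neg_mul, mul_neg, neg_neg, one_mul, mul_one,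
          Finset.sum_add_distrib, Finset.sum_neg_distrib]
        ring
      have h1 : ∑ p, ∑ q, a p * a q * k (xs p) (xs q) = a ⬝ᵥ (K *ᵥ a) := by
        simp only [dotProduct, Matrix.mulVec, hKdef, _root_.gram, Finset.mul_sum]
        exact Finset.sum_congr rfl fun p _ => Finset.sum_congr rfl fun q _ => by ring
      have h2 : ∑ p, a p * k (xs p) x = a ⬝ᵥ kv := by
        simp [dotProduct, hkv, kvec]
      have h3 : ∑ q, a q * k x (xs q) = a ⬝ᵥ kv := by
        simp only [dotProduct, hkv, kvec]
        exact Finset.sum_congr rfl fun q _ => by rw [hsym]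
      have h4 : kv ⬝ᵥ (K⁻¹ *ᵥ kv) = a ⬝ᵥ kv := dotProduct_comm _ _
      rw [expand, h1, h2, h3, hKa, h4]
      ring
    have hCnn : 0 ≤ k x x - kv ⬝ᵥ (K⁻¹ *ᵥ kv) := hC ▸ hpsd (t+1) yv d
    have hcs := kernel_cs k hsym hpsd c xv d yv
    rw [hB, hC] at hcs
    calc |f x - postMean k xs f x|
        = Real.sqrt ((f x - postMean k xs f x)^2) := (Real.sqrt_sq_eq_abs _).symm
      _ ≤ Real.sqrt (A * (k x x - kv ⬝ᵥ (K⁻¹ *ᵥ kv))) := Real.sqrt_le_sqrt hcs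
      _ = Real.sqrt A * postStdInv k xs x := by
          rw [Real.sqrt_mul hAnn, postStdInv]
  · intro x
    have hcs := kernel_cs k hsym hpsd c xv (fun _ : Fin 1 => (1:ℝ)) (fun _ => x)
    simp only [Fin.sum_univ_one, mul_one, one_mul] at hcs
    rw [← hf x] at hcs
    calc |f x| = Real.sqrt ((f x)^2) := (Real.sqrt_sq_eq_abs _).symm
      _ ≤ Real.sqrt (A * k x x) := Real.sqrt_le_sqrt hcs
      _ = Real.sqrt A * Real.sqrt (k x x) := Real.sqrt_mul hAnn _
end
end

section
/- Cumulative regret bound for GP-UCB via posterior standard deviations: let f belong to the pre-RKHS of k with ‖f‖_k ≤ B for some B > 0, and let x* ∈ X satisfy f(x*) = sup_{x ∈ X} f(x). If the sequence (x_t)_{t≥1} follows the GP-UCB rule with parameter B, then for every T ∈ ℕ₊, ∑_{t=1}^T (f(x*) − f(x_t)) ≤ 2B ∑_{t=1}^T σ(x_t; X_{t−1}). -/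
open Matrix

noncomputable section

def QF {X ι : Type*} [Fintype ι] (k : X → X → ℝ) (p : ι → X) (a b : ι → ℝ) : ℝ :=
  ∑ i, ∑ j, a i * b j * k (p i) (p j)

lemma QF_nonneg {X : Type*} (k : X → X → ℝ)
    (hpsd : ∀ (n : ℕ) (xv : Fin n → X) (c : Fin n → ℝ),
      0 ≤ ∑ i, ∑ j, c i * c j * k (xv i) (xv j))
    {ι : Type*} [Fintype ι] (p : ι → X) (a : ι → ℝ) : 0 ≤ QF k p a a := by
  classical
  let e := Fintype.equivFin ι
  have h := hpsd (Fintype.card ι) (p ∘ e.symm) (a ∘ e.symm)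
  have : QF k p a a = ∑ i, ∑ j, (a ∘ e.symm) i * (a ∘ e.symm) j * k ((p ∘ e.symm) i) ((p ∘ e.symm) j) := by
    rw [QF]
    rw [← Equiv.sum_comp e.symm (fun i => ∑ j, a i * a j * k (p i) (p j))]
    refine Finset.sum_congr rfl fun i _ => ?_
    rw [← Equiv.sum_comp e.symm (fun j => a (e.symm i) * a j * k (p (e.symm i)) (p j))]
    rfl
  linarith [this ▸ h, h]

lemma QF_symm {X : Type*} (k : X → X → ℝ) (hsym : ∀ x y : X, k x y = k y x)
    {ι : Type*} [Fintype ι] (p : ι → X) (a b : ι → ℝ) : QF k p a b = QF k p b a := by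
  rw [QF, QF, Finset.sum_comm]
  exact Finset.sum_congr rfl fun j _ => Finset.sum_congr rfl fun i _ => by rw [hsym]; ring

lemma QF_expand {X : Type*} (k : X → X → ℝ) (hsym : ∀ x y : X, k x y = k y x)
    {ι : Type*} [Fintype ι] (p : ι → X) (a b : ι → ℝ) (s : ℝ) :
    QF k p (fun i => a i + s * b i) (fun i => a i + s * b i)
      = QF k p b b * s ^ 2 + 2 * QF k p a b * s + QF k p a a := by
  have hba := QF_symm k hsym p b a
  simp only [QF] at *
  have : ∀ i j : ι, (a i + s * b i) * (a j + s * b j) * k (p i) (p j)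
      = b i * b j * k (p i) (p j) * s ^ 2 + (a i * b j * k (p i) (p j)
        + b i * a j * k (p i) (p j)) * s + a i * a j * k (p i) (p j) := by
    intro i j; ring
  simp only [this, Finset.sum_add_distrib, ← Finset.sum_mul, Finset.sum_add_distrib]
  rw [hba]; ring

lemma QF_cauchy {X : Type*} (k : X → X → ℝ) (hsym : ∀ x y : X, k x y = k y x)
    (hpsd : ∀ (n : ℕ) (xv : Fin n → X) (c : Fin n → ℝ),
      0 ≤ ∑ i, ∑ j, c i * c j * k (xv i) (xv j))
    {ι : Type*} [Fintype ι] (p : ι → X) (a b : ι → ℝ) :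
    QF k p a b ^ 2 ≤ QF k p a a * QF k p b b := by
  have h : ∀ s : ℝ, 0 ≤ QF k p b b * s ^ 2 + 2 * QF k p a b * s + QF k p a a := by
    intro s
    rw [← QF_expand k hsym p a b s]
    exact QF_nonneg k hpsd p _
  have h' : ∀ s : ℝ, 0 ≤ QF k p b b * (s * s) + 2 * QF k p a b * s + QF k p a a := by
    intro s; nlinarith [h s]
  have hd := discrim_le_zero (a := QF k p b b) (b := 2 * QF k p a b) (c := QF k p a a) h'
  rw [discrim] at hd
  nlinarith [hd]

lemma err_bound {X : Type*} (k : X → X → ℝ)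
    (hsym : ∀ x y : X, k x y = k y x)
    (hpsd : ∀ (n : ℕ) (xv : Fin n → X) (c : Fin n → ℝ),
      0 ≤ ∑ i, ∑ j, c i * c j * k (xv i) (xv j))
    (f : X → ℝ) (n : ℕ) (c : Fin n → ℝ) (xv : Fin n → X)
    (hf : ∀ x : X, f x = ∑ i, c i * k (xv i) x)
    (B : ℝ) (hB : 0 < B)
    (hnorm : Real.sqrt (∑ i, ∑ j, c i * c j * k (xv i) (xv j)) ≤ B)
    {t : ℕ} (y : Fin t → X) (hU : IsUnit (gram k y).det) (x : X) :
    |f x - postMean k y f x| ≤ B * postStdInv k y x := by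
  classical
  set K := gram k y with hK
  set kv := kvec k y x with hkv
  set α := K⁻¹ *ᵥ kv with hα
  set p : (Fin n ⊕ Fin t) ⊕ Unit → X := Sum.elim (Sum.elim xv y) (fun _ => x) with hp
  set u : (Fin n ⊕ Fin t) ⊕ Unit → ℝ := Sum.elim (Sum.elim c (fun _ => 0)) (fun _ => 0) with hu
  set v : (Fin n ⊕ Fin t) ⊕ Unit → ℝ :=
    Sum.elim (Sum.elim (fun _ => 0) (fun j => -α j)) (fun _ => 1) with hv
  have hKsym : Kᵀ = K := by
    ext i j
    simp only [hK, Matrix.transpose_apply, _root_.gram]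
    exact hsym _ _
  have hKα : K *ᵥ α = kv := by
    rw [hα, Matrix.mulVec_mulVec, Matrix.mul_nonsing_inv _ hU, Matrix.one_mulVec]
  have hμ : postMean k y f x = ∑ j, α j * f (y j) := by
    have h1 : kvec k y x ᵥ* K⁻¹ = α := by
      rw [hα, ← hKsym, ← Matrix.transpose_nonsing_inv, Matrix.vecMul_transpose, hkv]
      rw [Matrix.transpose_nonsing_inv, hKsym]
    rw [postMean, ← hK, Matrix.dotProduct_mulVec, ← hkv, h1]
    rfl
  -- QF u u
  have huu : QF k p u u = ∑ i, ∑ j, c i * c j * k (xv i) (xv j) := by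
    simp [QF, hp, hu, Fintype.sum_sum_type]
  -- QF u v
  have huv : QF k p u v = f x - postMean k y f x := by
    have e1 : QF k p u v
        = ∑ i : Fin n, ((∑ j : Fin t, c i * -α j * k (xv i) (y j)) + c i * k (xv i) x) := by
      simp [QF, hp, hu, hv, Fintype.sum_sum_type]
    have e2 : ∀ i : Fin n, ∑ j : Fin t, c i * -α j * k (xv i) (y j)
        = ∑ j : Fin t, -(α j * (c i * k (xv i) (y j))) :=
      fun i => Finset.sum_congr rfl fun j _ => by ring
    rw [e1, Finset.sum_add_distrib, hμ]
    have e3 : ∑ i : Fin n, c i * k (xv i) x = f x := (hf x).symm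
    have e4 : ∑ i : Fin n, ∑ j : Fin t, c i * -α j * k (xv i) (y j)
        = -∑ j : Fin t, α j * f (y j) := by
      simp only [e2]
      rw [Finset.sum_comm]
      rw [← Finset.sum_neg_distrib]
      refine Finset.sum_congr rfl fun j _ => ?_
      rw [Finset.sum_neg_distrib]
      congr 1
      rw [hf (y j), Finset.mul_sum]
    rw [e3, e4]
    ring
  -- QF v v
  have hS : ∑ j, α j * k (y j) x = α ⬝ᵥ kv := by
    simp [hkv, kvec, dotProduct]
  have hA : ∑ j, ∑ j', α j * α j' * k (y j) (y j') = α ⬝ᵥ kv := by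
    have h1 : ∀ j, ∑ j', α j * α j' * k (y j) (y j') = α j * (K *ᵥ α) j := by
      intro j
      rw [Matrix.mulVec, dotProduct, Finset.mul_sum]
      refine Finset.sum_congr rfl fun j' _ => ?_
      simp only [hK, _root_.gram]
      ring
    calc ∑ j, ∑ j', α j * α j' * k (y j) (y j') = ∑ j, α j * (K *ᵥ α) j :=
          Finset.sum_congr rfl fun j _ => h1 j
      _ = α ⬝ᵥ (K *ᵥ α) := rfl
      _ = α ⬝ᵥ kv := by rw [hKα]
  have hvv : QF k p v v = k x x - kv ⬝ᵥ α := by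
    have e1 : QF k p v v
        = (∑ j, ((∑ j', -α j * (-α j') * k (y j) (y j')) + -α j * k (y j) x))
          + ((∑ j', (-α j') * k x (y j')) + k x x) := by
      simp [QF, hp, hv, Fintype.sum_sum_type]
    have p1 : ∑ j, ∑ j', -α j * (-α j') * k (y j) (y j') = α ⬝ᵥ kv := by
      rw [← hA]
      exact Finset.sum_congr rfl fun j _ => Finset.sum_congr rfl fun j' _ => by ring
    have p2 : ∑ j, -α j * k (y j) x = -(α ⬝ᵥ kv) := by
      rw [← hS, ← Finset.sum_neg_distrib]
      exact Finset.sum_congr rfl fun j _ => by ring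
    have p3 : ∑ j', (-α j') * k x (y j') = -(α ⬝ᵥ kv) := by
      rw [← hS, ← Finset.sum_neg_distrib]
      refine Finset.sum_congr rfl fun j _ => ?_
      rw [hsym x (y j)]
      ring
    rw [e1, Finset.sum_add_distrib, p1, p2, p3, dotProduct_comm]
    ring
  have hstd : postStdInv k y x = Real.sqrt (QF k p v v) := by
    rw [postStdInv, hvv, ← hK, ← hkv, ← hα, dotProduct_comm]
  have hQuu_nn := QF_nonneg k hpsd p u
  have hQvv_nn := QF_nonneg k hpsd p v
  have hcs := QF_cauchy k hsym hpsd p u v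
  rw [← huu] at hnorm
  have hBu : QF k p u u ≤ B ^ 2 := by
    nlinarith [Real.sq_sqrt hQuu_nn, Real.sqrt_nonneg (QF k p u u)]
  have hsq : (f x - postMean k y f x) ^ 2 ≤ B ^ 2 * QF k p v v := by
    rw [← huv]
    nlinarith [hcs, hBu, hQvv_nn]
  calc |f x - postMean k y f x| = Real.sqrt ((f x - postMean k y f x) ^ 2) :=
        (Real.sqrt_sq_eq_abs _).symm
    _ ≤ Real.sqrt (B ^ 2 * QF k p v v) := Real.sqrt_le_sqrt hsq
    _ = B * Real.sqrt (QF k p v v) := by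
        rw [Real.sqrt_mul (sq_nonneg B), Real.sqrt_sq hB.le]
      _ = B * postStdInv k y x := by rw [hstd]

/-- Cumulative regret bound for GP-UCB via posterior standard deviations. -/
theorem gp_ucb_cumulative_regret_via_postStd
    {X : Type*} [Nonempty X] (k : X → X → ℝ)
    (hsym : ∀ x y : X, k x y = k y x)
    (hpsd : ∀ (n : ℕ) (xv : Fin n → X) (c : Fin n → ℝ),
      0 ≤ ∑ i, ∑ j, c i * c j * k (xv i) (xv j))
    (f : X → ℝ) (n : ℕ) (c : Fin n → ℝ) (xv : Fin n → X)
    (hf : ∀ x : X, f x = ∑ i, c i * k (xv i) x)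
    (B : ℝ) (hB : 0 < B)
    (hnorm : Real.sqrt (∑ i, ∑ j, c i * c j * k (xv i) (xv j)) ≤ B)
    (xstar : X) (hstar : ∀ x : X, f x ≤ f xstar)
    (xseq : ℕ → X)
    (hinv : ∀ t : ℕ, 1 ≤ t → IsUnit (gram k (prefN xseq t)).det)
    (hucb : ∀ (t : ℕ) (x : X),
      postMean k (prefN xseq t) f x + B * postStdInv k (prefN xseq t) x ≤
        postMean k (prefN xseq t) f (xseq t) + B * postStdInv k (prefN xseq t) (xseq t)) :
    ∀ T : ℕ, 0 < T →
      ∑ t : Fin T, (f xstar - f (xseq t)) ≤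
        2 * B * ∑ t : Fin T, postStdInv k (prefN xseq t.1) (xseq t.1) := by
  intro T hT
  have step : ∀ t : ℕ, f xstar - f (xseq t) ≤ 2 * B * postStdInv k (prefN xseq t) (xseq t) := by
    intro t
    have hU : IsUnit (gram k (prefN xseq t)).det := by
      rcases Nat.eq_zero_or_pos t with h0 | h1
      · subst h0; simp
      · exact hinv t h1
    have e1 := err_bound k hsym hpsd f n c xv hf B hB hnorm (prefN xseq t) hU xstar
    have e2 := err_bound k hsym hpsd f n c xv hf B hB hnorm (prefN xseq t) hU (xseq t)
    have hu := hucb t xstar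
    rw [abs_le] at e1 e2
    obtain ⟨e1a, e1b⟩ := e1
    obtain ⟨e2a, e2b⟩ := e2
    linarith
  calc ∑ t : Fin T, (f xstar - f (xseq t))
      ≤ ∑ t : Fin T, 2 * B * postStdInv k (prefN xseq t.1) (xseq t.1) :=
        Finset.sum_le_sum fun t _ => step t.1
    _ = 2 * B * ∑ t : Fin T, postStdInv k (prefN xseq t.1) (xseq t.1) := by
        rw [Finset.mul_sum]
end
end
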